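/- Let λ be an infinite cardinal and call a subtree S ⊆ λ^{<ω} reasonable if for every s ∈ S the set {α < λ : s⌢(α) ∉ S} is infinite. Let I ⊆ λ^ω be the eventually-zero sequences, and for a subtree S define M_S = (I × {0}) ∪ {(η,1) : η ∈ λ^ω and t⌢(1) ⊑ η for some t ∈ λ^{<ω} ∖ S}, with relations E_n((η,i),(ν,j)) iff η↾n = ν↾n. Define Tr(M) = {s ∈ λ^{<ω} : for all α < λ there is η ∈ λ^ω with s⌢(α) ⊑ η and (η,1) ∉ M}. Then for every subtree S ⊆ λ^{<ω}, Tr(M_S) = S. -/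

import Mathlib

/-- `s` is an initial segment of the infinite sequence `η`. -/
def prefixOf {α : Type*} (s : List α) (η : ℕ → α) : Prop :=
  ∀ i : Fin s.length, η i = s.get i

/-- The structure `M_S`: the eventually-zero sequences tagged `0`, together with pairs
`(η, 1)` for branches `η` extending `t⌢(1)` for some node `t ∉ S`. Here `z` plays the role
of `0 ∈ λ` and `o` the role of `1 ∈ λ`. -/
def MS {α : Type*} (z o : α) (S : Set (List α)) : Set ((ℕ → α) × ℕ) :=
  {p | (p.2 = 0 ∧ ∃ N, ∀ n, N ≤ n → p.1 n = z) ∨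
       (p.2 = 1 ∧ ∃ t : List α, t ∉ S ∧ prefixOf (t ++ [o]) p.1)}

/-- The tree recovered from a structure `M`:
`Tr(M) = {s : for all α there is η ⊒ s⌢(α) with (η,1) ∉ M}`. -/
def Tr {α : Type*} (M : Set ((ℕ → α) × ℕ)) : Set (List α) :=
  {s | ∀ a : α, ∃ η : ℕ → α, prefixOf (s ++ [a]) η ∧ (η, 1) ∉ M}

/-- For every subtree `S ⊆ λ^{<ω}` (with `λ` infinite), `Tr(M_S) = S`. -/
theorem stmt16 {α : Type*} [Infinite α] (z o : α) (hzo : z ≠ o)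
    (S : Set (List α)) (hS0 : ([] : List α) ∈ S)
    (hScl : ∀ s t : List α, s <+: t → t ∈ S → s ∈ S) :
    Tr (MS z o S) = S := by
  ext s
  constructor
  · intro hs
    by_contra hsn
    obtain ⟨η, hpre, hnot⟩ := hs o
    exact hnot (Or.inr ⟨rfl, s, hsn, hpre⟩)
  · intro hsS a
    set η : ℕ → α := fun n => if h : n < (s ++ [a]).length then (s ++ [a]).get ⟨n, h⟩ else z
      with hη
    refine ⟨η, fun i => by simp only [hη]; rw [dif_pos i.isLt], ?_⟩
    rintro (⟨h0, -⟩ | ⟨-, t, htS, hpre⟩)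
    · exact one_ne_zero h0
    · apply htS
      have hlen : t.length ≤ s.length := by
        by_contra hl
        push_neg at hl
        have h1 : η t.length = (t ++ [o]).get ⟨t.length, by simp⟩ :=
          hpre ⟨t.length, by simp⟩
        have h2 : η t.length = z := dif_neg (by simp; omega)
        rw [h1] at h2
        simp at h2
        exact hzo h2.symm
      have hts : t = s.take t.length := by
        apply List.ext_get
        · simp [min_eq_left hlen]
        · intro i hi1 hi2
          have h1 : η i = (t ++ [o]).get ⟨i, by simp; omega⟩ :=
            hpre ⟨i, by simp; omega⟩
          have h2 : η i = (s ++ [a]).get ⟨i, by simp; omega⟩ :=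
            dif_pos (by simp; omega)
          rw [h1] at h2
          have h3 : (t ++ [o]).get ⟨i, by simp; omega⟩ = t.get ⟨i, hi1⟩ :=
            by simp [List.getElem_append_left hi1]
          have h4 : (s ++ [a]).get ⟨i, by simp; omega⟩ = s.get ⟨i, by omega⟩ :=
            by simp [List.getElem_append_left (show i < s.length by omega)]
          rw [h3, h4] at h2
          rw [h2]; simp
      exact hScl t s (hts ▸ List.take_prefix _ _) hsS
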